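/- The quantity max_{0<p≤p_0(t)} μ_p(F_2^t)/μ_p(F_0^t) = C(t+6,2) p_0^4 q_0^2 + (t+6) p_0^5 q_0 + p_0^6 tends to 1/2 as t → ∞, where p_0 = 2/(√(4t+9)−1) and q_0 = 1 − p_0. -/

import Mathlib

open Finset

/-- p-biased measure of a family on ground set of size `n` (= `[n]`). -/
def mu (p : ℝ) (n : ℕ) (G : Finset (Finset ℕ)) : ℝ :=
  ∑ A ∈ G, p ^ A.card * (1 - p) ^ (n - A.card)

/-- p-biased measure of a family on an arbitrary finite ground set `X`. -/
def muOn (p : ℝ) (X : Finset ℕ) (G : Finset (Finset ℕ)) : ℝ :=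
  ∑ A ∈ G, p ^ A.card * (1 - p) ^ (X.card - A.card)

/-- `F_0^t = {F ⊆ [n] : [t] ⊆ F}`. -/
def F0 (n t : ℕ) : Finset (Finset ℕ) :=
  (Finset.Icc 1 n).powerset.filter (fun F => Finset.Icc 1 t ⊆ F)

/-- `F_1^t = {F ⊆ [n] : |F ∩ [t+3]| ≥ t+2}`. -/
def F1 (n t : ℕ) : Finset (Finset ℕ) :=
  (Finset.Icc 1 n).powerset.filter (fun F => t + 2 ≤ (F ∩ Finset.Icc 1 (t + 3)).card)

/-- `F_2^t = {F ⊆ [n] : |F ∩ [t+6]| ≥ t+4}`. -/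
def F2 (n t : ℕ) : Finset (Finset ℕ) :=
  (Finset.Icc 1 n).powerset.filter (fun F => t + 4 ≤ (F ∩ Finset.Icc 1 (t + 6)).card)

/-- `p_0(t) = 2/(√(4t+9) − 1)`. -/
noncomputable def p0 (t : ℕ) : ℝ := 2 / (Real.sqrt (4 * t + 9) - 1)

/-- The family is `r`-wise `t`-intersecting: any `r` members (with repetition)
intersect in at least `t` elements. -/
def RWise (r t : ℕ) (G : Finset (Finset ℕ)) : Prop :=
  ∀ f : Fin r → Finset ℕ, (∀ k, f k ∈ G) → t ≤ (⋂ k, (f k : Set ℕ)).ncard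

/-- The shift `s_{i,j}` of a single set `A`, relative to the family `G`. -/
def shiftSet (i j : ℕ) (G : Finset (Finset ℕ)) (A : Finset ℕ) : Finset ℕ :=
  if A ∩ {i, j} = {j} ∧ (A.erase j ∪ {i}) ∉ G then A.erase j ∪ {i} else A

/-- The shifting operation `σ_{i,j}` applied to a family. -/
def shift (i j : ℕ) (G : Finset (Finset ℕ)) : Finset (Finset ℕ) :=
  G.image (shiftSet i j G)

/-- `G` and `H` are isomorphic as families on ground set `[n]`:
`H` is the image of `G` under a permutation preserving `[n]`. -/
def Iso (n : ℕ) (G H : Finset (Finset ℕ)) : Prop :=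
  ∃ τ : Equiv.Perm ℕ, (∀ x, x ∈ Finset.Icc 1 n ↔ τ x ∈ Finset.Icc 1 n) ∧
    H = G.image (fun A => A.image τ)

/-- `G` is `(3,t)`-maximal on `[n]`. -/
def Max3 (n t : ℕ) (G : Finset (Finset ℕ)) : Prop :=
  (∀ A ∈ G, A ⊆ Finset.Icc 1 n) ∧ RWise 3 t G ∧
    ∀ F : Finset ℕ, F ⊆ Finset.Icc 1 n → F ∉ G → ¬ RWise 3 t (insert F G)

/-- `G` is shifted on `[n]`. -/
def Shifted (n : ℕ) (G : Finset (Finset ℕ)) : Prop :=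
  ∀ i j : ℕ, 1 ≤ i → i < j → j ≤ n → shift i j G = G

/-- One shifting step. -/
def ShiftStep (n : ℕ) (G H : Finset (Finset ℕ)) : Prop :=
  ∃ i j : ℕ, 1 ≤ i ∧ i ≤ n ∧ 1 ≤ j ∧ j ≤ n ∧ H = shift i j G

open Filter Real

lemma aux_sqrt_tendsto : Tendsto (fun t : ℕ => Real.sqrt (4 * t + 9)) atTop atTop := by
  apply Filter.tendsto_atTop_atTop.2
  intro b
  refine ⟨⌈b^2⌉₊, fun a ha => ?_⟩
  have h1 : (b:ℝ)^2 ≤ 4 * a + 9 := by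
    have := Nat.le_ceil (b^2)
    have : ((⌈b^2⌉₊ : ℕ) : ℝ) ≤ a := by exact_mod_cast ha
    nlinarith [Nat.le_ceil (b^2), this]
  calc b ≤ Real.sqrt (b^2) := by
        rcases le_or_gt b 0 with h|h
        · exact h.trans (Real.sqrt_nonneg _)
        · rw [Real.sqrt_sq h.le]
      _ ≤ Real.sqrt (4 * a + 9) := Real.sqrt_le_sqrt h1

lemma aux_sqrt_ge_three (t : ℕ) : (3:ℝ) ≤ Real.sqrt (4 * t + 9) := by
  have h3 : Real.sqrt 9 = 3 := by
    rw [show (9:ℝ) = 3^2 by norm_num, Real.sqrt_sq (by norm_num : (0:ℝ) ≤ 3)]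
  rw [← h3]
  exact Real.sqrt_le_sqrt (by nlinarith [Nat.cast_nonneg (α := ℝ) t])

lemma aux_hP : Tendsto p0 atTop (nhds 0) := by
  have h : Tendsto (fun t : ℕ => Real.sqrt (4 * t + 9) - 1) atTop atTop :=
    tendsto_atTop_add_const_right _ (-1) aux_sqrt_tendsto
  exact Filter.Tendsto.div_atTop (tendsto_const_nhds (x := (2:ℝ))) h

lemma aux_rat_tendsto : Tendsto (fun u : ℝ => (u^2 - 9) / (u - 1)^2) atTop (nhds 1) := by
  have h0 : Tendsto (fun u : ℝ => u⁻¹) atTop (nhds 0) := tendsto_inv_atTop_zero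
  have hc : Tendsto (fun x : ℝ => (1 - 9 * x^2) / (1 - x)^2) (nhds 0) (nhds 1) := by
    have : ContinuousAt (fun x : ℝ => (1 - 9 * x^2) / (1 - x)^2) 0 := by
      apply ContinuousAt.div
      · fun_prop
      · fun_prop
      · norm_num
    simpa using this.tendsto
  have := hc.comp h0
  apply this.congr'
  filter_upwards [eventually_ge_atTop (2:ℝ)] with u hu
  have hu0 : u ≠ 0 := by linarith
  simp only [Function.comp_apply]
  have hu1 : u - 1 ≠ 0 := by linarith
  field_simp

lemma aux_hC : Tendsto (fun t : ℕ => (t : ℝ) * p0 t ^ 2) atTop (nhds 1) := by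
  have := aux_rat_tendsto.comp aux_sqrt_tendsto
  apply this.congr
  intro t
  set u := Real.sqrt (4 * t + 9) with hu
  have hu2 : u ^ 2 = 4 * t + 9 := Real.sq_sqrt (by positivity)
  have hu3 : (3:ℝ) ≤ u := aux_sqrt_ge_three t
  have hne : u - 1 ≠ 0 := by linarith
  simp only [Function.comp, p0, ← hu]
  field_simp
  nlinarith [hu2]

theorem stmt_4 :
    Filter.Tendsto (fun t : ℕ =>
      (Nat.choose (t + 6) 2 : ℝ) * p0 t ^ 4 * (1 - p0 t) ^ 2
        + (t + 6 : ℝ) * p0 t ^ 5 * (1 - p0 t) + p0 t ^ 6)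
      Filter.atTop (nhds (1 / 2)) := by
  have aux_hP2 : Tendsto (fun t : ℕ => p0 t ^ 2) atTop (nhds 0) := by
    simpa using (aux_hP.pow 2)
  have aux_hP3 : Tendsto (fun t : ℕ => p0 t ^ 3) atTop (nhds 0) := by
    simpa using (aux_hP.pow 3)
  have hA1 : Tendsto (fun t : ℕ => ((t:ℝ) + 6) * p0 t ^ 2) atTop (nhds 1) := by
    have := aux_hC.add (aux_hP2.const_mul 6)
    norm_num at this
    apply this.congr; intro t; ring
  have hA2 : Tendsto (fun t : ℕ => ((t:ℝ) + 5) * p0 t ^ 2) atTop (nhds 1) := by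
    have := aux_hC.add (aux_hP2.const_mul 5)
    norm_num at this
    apply this.congr; intro t; ring
  have hQ : Tendsto (fun t : ℕ => 1 - p0 t) atTop (nhds 1) := by
    simpa using (tendsto_const_nhds (x := (1:ℝ))).sub aux_hP
  have key := ((((hA1.mul hA2).div_const 2).mul (hQ.pow 2)).add
      ((hA1.mul aux_hP3).mul hQ)).add (aux_hP2.pow 3)
  norm_num at key
  apply key.congr
  intro t
  rw [Nat.cast_choose_two]
  push_cast [Nat.cast_add]
  ring
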